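/- If each element of a set S (with |S| = m) independently remains in a random subset S′ with probability at least 1 − δ, and f is nonnegative monotone submodular, then E[f(S′)] ≥ (1 − δ) f(S). In particular, if an algorithm's solution set S satisfies that each of its elements appears in the shortlist R with probability at least 1 − ε/2 given the configuration, then E[f(S ∩ R)] ≥ (1 − ε/2) E[f(S)]. -/
import Mathlib

private lemma exists_linearization {U : Type*} [DecidableEq U]
    (f : Finset U → ℝ)
    (hmono : ∀ A B : Finset U, A ⊆ B → f A ≤ f B)
    (hsub : ∀ A B : Finset U, A ⊆ B → ∀ x ∉ B,
      f (insert x A) - f A ≥ f (insert x B) - f B)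
    (S : Finset U) :
    ∃ g : U → ℝ, (∀ x, 0 ≤ g x) ∧ (∑ x ∈ S, g x = f S - f ∅) ∧
      (∀ T ⊆ S, f ∅ + ∑ x ∈ T, g x ≤ f T) := by
  induction S using Finset.induction_on with
  | empty =>
    refine ⟨fun _ => 0, fun _ => le_refl 0, by simp, ?_⟩
    intro T hT
    simp [Finset.subset_empty.mp hT]
  | @insert a s ha ih =>
    obtain ⟨g, hg0, hgsum, hgT⟩ := ih
    refine ⟨fun x => if x = a then f (insert a s) - f s else g x, ?_, ?_, ?_⟩
    · intro x
      by_cases hx : x = a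
      · simp only []
        rw [if_pos hx]
        have := hmono s (insert a s) (Finset.subset_insert a s)
        linarith
      · simp [hx, hg0 x]
    · rw [Finset.sum_insert ha, if_pos rfl]
      have : ∑ x ∈ s, (if x = a then f (insert a s) - f s else g x) = ∑ x ∈ s, g x := by
        apply Finset.sum_congr rfl
        intro x hx
        have : x ≠ a := fun h => ha (h ▸ hx)
        simp [this]
      rw [this, hgsum]; ring
    · intro T hT
      by_cases haT : a ∈ T
      · have hT' : T.erase a ⊆ s := by
          intro x hx
          have := hT (Finset.mem_of_mem_erase hx)
          rcases Finset.mem_insert.mp this with h | h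
          · exact absurd h (Finset.ne_of_mem_erase hx)
          · exact h
        have h1 := hgT (T.erase a) hT'
        have h2 := hsub (T.erase a) s hT' a ha
        have hTe : T = insert a (T.erase a) := (Finset.insert_erase haT).symm
        have hsum : ∑ x ∈ T, (if x = a then f (insert a s) - f s else g x)
            = (f (insert a s) - f s) + ∑ x ∈ T.erase a, g x := by
          have heq : ∑ x ∈ T.erase a, (if x = a then f (insert a s) - f s else g x)
              = ∑ x ∈ T.erase a, g x := by
            apply Finset.sum_congr rfl
            intro x hx
            simp [Finset.ne_of_mem_erase hx]
          conv_lhs => rw [hTe]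
          rw [Finset.sum_insert (Finset.notMem_erase a T), if_pos rfl, heq]
        rw [hsum]
        have : f T = f (insert a (T.erase a)) := by rw [← hTe]
        rw [this]
        linarith
      · have hT' : T ⊆ s := by
          intro x hx
          rcases Finset.mem_insert.mp (hT hx) with h | h
          · exact absurd (h ▸ hx) haT
          · exact h
        have h1 := hgT T hT'
        have : ∑ x ∈ T, (if x = a then f (insert a s) - f s else g x) = ∑ x ∈ T, g x := by
          apply Finset.sum_congr rfl
          intro x hx
          have : x ≠ a := fun h => haT (h ▸ hx)
          simp [this]
        rw [this]
        exact h1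

theorem retention_sampling_bound {U : Type*} [Fintype U] [DecidableEq U]
    {Ω : Type*} [Fintype Ω]
    (f : Finset U → ℝ)
    (hnonneg : ∀ A, 0 ≤ f A)
    (hmono : ∀ A B : Finset U, A ⊆ B → f A ≤ f B)
    (hsub : ∀ A B : Finset U, A ⊆ B → ∀ x ∉ B,
      f (insert x A) - f A ≥ f (insert x B) - f B)
    (S : Finset U) (ε δ : ℝ) (hδ : δ = ε/2) (hδ0 : 0 ≤ δ) (hδ1 : δ < 1)
    (w : Ω → ℝ) (hw : ∀ ω, 0 ≤ w ω) (hw1 : ∑ ω, w ω = 1)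
    (S' : Ω → Finset U) (hsubS : ∀ ω, S' ω ⊆ S)
    (hmarg : ∀ x ∈ S, (∑ ω, if x ∈ S' ω then w ω else 0) ≥ 1 - δ)
    (hindep : ∀ T ⊆ S,
      (∑ ω, if T ⊆ S' ω then w ω else 0)
        = ∏ x ∈ T, ∑ ω, if x ∈ S' ω then w ω else 0) :
    (∑ ω, w ω * f (S' ω)) ≥ (1 - δ) * f S := by
  obtain ⟨g, hg0, hgsum, hgT⟩ := exists_linearization f hmono hsub S
  have step1 : ∑ ω, w ω * f (S' ω) ≥ ∑ ω, w ω * (f ∅ + ∑ x ∈ S' ω, g x) := by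
    apply Finset.sum_le_sum
    intro ω _
    exact mul_le_mul_of_nonneg_left (hgT (S' ω) (hsubS ω)) (hw ω)
  have key : ∀ ω, ∑ x ∈ S' ω, g x = ∑ x ∈ S, if x ∈ S' ω then g x else 0 := by
    intro ω
    rw [Finset.sum_ite_mem, Finset.inter_eq_right.mpr (hsubS ω)]
  have step2 : ∑ ω, w ω * (f ∅ + ∑ x ∈ S' ω, g x)
      = f ∅ + ∑ x ∈ S, g x * (∑ ω, if x ∈ S' ω then w ω else 0) := by
    simp_rw [mul_add, Finset.sum_add_distrib, ← Finset.sum_mul, hw1, one_mul, key,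
      Finset.mul_sum, mul_ite, mul_zero]
    rw [Finset.sum_comm]
    congr 1
    apply Finset.sum_congr rfl
    intro x _
    apply Finset.sum_congr rfl
    intro ω _
    by_cases h : x ∈ S' ω <;> simp [h, mul_comm]
  have step3 : ∑ x ∈ S, g x * (∑ ω, if x ∈ S' ω then w ω else 0)
      ≥ ∑ x ∈ S, g x * (1 - δ) := by
    apply Finset.sum_le_sum
    intro x hx
    exact mul_le_mul_of_nonneg_left (hmarg x hx) (hg0 x)
  have hsum3 : ∑ x ∈ S, g x * (1 - δ) = (1 - δ) * (f S - f ∅) := by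
    rw [← Finset.sum_mul, hgsum]; ring
  have h0 := hnonneg ∅
  calc ∑ ω, w ω * f (S' ω) ≥ ∑ ω, w ω * (f ∅ + ∑ x ∈ S' ω, g x) := step1
    _ = f ∅ + ∑ x ∈ S, g x * (∑ ω, if x ∈ S' ω then w ω else 0) := step2
    _ ≥ f ∅ + (1 - δ) * (f S - f ∅) := by rw [← hsum3]; linarith [step3]
    _ ≥ (1 - δ) * f S := by nlinarith
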